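/- Let κ, c ∈ ℂ with κ not zero or a negative integer, and suppose Re(κ) − (1/2)(e−1)|κ−1| ≥ |c|/4 + 1/2. Then the normalized generalized Struve function u_{κ,c} belongs to the class P_e. -/

import Mathlib

open Complex Metric Set

noncomputable def poch (x : ℂ) (n : ℕ) : ℂ := ∏ k ∈ Finset.range n, (x + k)

/-- The class `P_e`: `p` is analytic on the unit disk, `p 0 = 1`, and `p` maps the
unit disk into `exp(𝔻)` (equivalently, `p` is subordinate to `exp`). -/
def memPe (p : ℂ → ℂ) : Prop :=
  AnalyticOnNhd ℂ p (Metric.ball 0 1) ∧ p 0 = 1 ∧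
    ∀ z ∈ Metric.ball (0:ℂ) 1, p z ∈ Complex.exp '' Metric.ball 0 1

/-- The class `K_e` of exponential convex functions. -/
def memKe (f : ℂ → ℂ) : Prop :=
  AnalyticOnNhd ℂ f (Metric.ball 0 1) ∧ f 0 = 0 ∧ deriv f 0 = 1 ∧
    (∀ z ∈ Metric.ball (0:ℂ) 1, deriv f z ≠ 0) ∧
    memPe (fun z => 1 + z * deriv (deriv f) z / deriv f z)

/-- The class `S*_e` of exponential starlike functions. -/
def memSe (f : ℂ → ℂ) : Prop :=
  AnalyticOnNhd ℂ f (Metric.ball 0 1) ∧ f 0 = 0 ∧ deriv f 0 = 1 ∧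
    (∀ z ∈ Metric.ball (0:ℂ) 1, z ≠ 0 → f z ≠ 0) ∧
    memPe (fun z => if z = 0 then 1 else z * deriv f z / f z)

/-- The normalized generalized Struve function of the first kind
`u_{κ,c}(z) = ∑_{n≥0} ((−c/4)^n / ((3/2)_n (κ)_n)) z^n`. -/
noncomputable def struveU (κ c : ℂ) (z : ℂ) : ℂ :=
  ∑' n : ℕ, (-c / 4) ^ n / (poch (3/2) n * poch κ n) * z ^ n

noncomputable def sCoef (κ c : ℂ) (n : ℕ) : ℂ :=
  (-c / 4) ^ n / (poch (3/2) n * poch κ n)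

lemma sCoef_zero (κ c : ℂ) : sCoef κ c 0 = 1 := by
  simp [sCoef, poch]

lemma abs_poch_ge (x : ℂ) (hx : 0 ≤ x.re) (n : ℕ) :
    x.re ^ n ≤ ‖poch x n‖ := by
  rw [poch, norm_prod]
  calc x.re ^ n = ∏ _k ∈ Finset.range n, x.re := by
        rw [Finset.prod_const, Finset.card_range]
    _ ≤ ∏ k ∈ Finset.range n, ‖x + (k : ℂ)‖ := by
        refine Finset.prod_le_prod (fun _ _ => hx) (fun k _ => ?_)
        refine le_trans ?_ (Complex.re_le_norm _)
        simp only [Complex.add_re, Complex.natCast_re]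
        have : (0:ℝ) ≤ (k:ℝ) := Nat.cast_nonneg k
        linarith

lemma sCoef_bound (κ c : ℂ) (ha : 1/2 ≤ κ.re) (hca : ‖c‖ ≤ 2 * κ.re) (n : ℕ) :
    ‖sCoef κ c n‖ ≤ (1/3) ^ n := by
  have ha0 : (0:ℝ) < κ.re := by linarith
  have h32 : ((3:ℝ)/2) ^ n ≤ ‖poch (3/2) n‖ := by
    have h1 : ((3:ℂ)/2) = ((3/2 : ℝ) : ℂ) := by norm_num
    have := abs_poch_ge ((3/2:ℝ):ℂ) (by norm_num) n
    rw [Complex.ofReal_re] at this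
    rw [h1]
    exact this
  have hκn : κ.re ^ n ≤ ‖poch κ n‖ := abs_poch_ge κ ha0.le n
  have hp1 : (0:ℝ) < ((3:ℝ)/2) ^ n := by positivity
  have hp2 : (0:ℝ) < κ.re ^ n := by positivity
  rw [sCoef, norm_div, norm_mul, norm_pow]
  have hnum : ‖-c / 4‖ = ‖c‖ / 4 := by
    rw [norm_div, norm_neg]
    norm_num
  rw [hnum]
  calc (‖c‖ / 4) ^ n / (‖poch (3/2) n‖ * ‖poch κ n‖)
      ≤ (‖c‖ / 4) ^ n / (((3:ℝ)/2) ^ n * κ.re ^ n) := by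
        gcongr <;> positivity
    _ = (‖c‖ / (6 * κ.re)) ^ n := by
        rw [← mul_pow, ← div_pow]
        ring_nf
    _ ≤ (1/3) ^ n := by
        apply pow_le_pow_left₀ (by positivity)
        rw [div_le_div_iff₀ (by linarith) (by norm_num)]
        linarith

lemma struveU_eq (κ c z : ℂ) : struveU κ c z = ∑' n : ℕ, sCoef κ c n * z ^ n := rfl

/-- Sufficient condition for the normalized generalized Struve function `u_{κ,c}`
to belong to the class `P_e`. -/
theorem struve_memPe (κ c : ℂ) (hκ : ∀ n : ℕ, κ ≠ -(n : ℂ))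
    (h : κ.re - (1 / 2) * (Real.exp 1 - 1) * ‖κ - 1‖ ≥
      ‖c‖ / 4 + 1 / 2) :
    memPe (struveU κ c) := by
  have hE : (2:ℝ) < Real.exp 1 := by
    have := Real.exp_one_gt_d9
    linarith
  have hA0 : (0:ℝ) ≤ ‖κ - 1‖ := norm_nonneg _
  have hc0 : (0:ℝ) ≤ ‖c‖ := norm_nonneg _
  have habs1 : |κ.re - 1| ≤ ‖κ - 1‖ := by
    have := Complex.abs_re_le_norm (κ - 1)
    rwa [Complex.sub_re, Complex.one_re] at this
  have ha : 1/2 ≤ κ.re := by nlinarith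
  have hca : ‖c‖ ≤ 2 * κ.re := by
    rcases abs_cases (κ.re - 1) with ⟨he, _⟩ | ⟨he, _⟩ <;> nlinarith
  -- coefficient bounds
  have key : ∀ n, ‖sCoef κ c n‖ ≤ (1/3:ℝ) ^ n := sCoef_bound κ c ha hca
  have hsumm : ∀ z : ℂ, ‖z‖ ≤ 1 → Summable (fun n => sCoef κ c n * z ^ n) := by
    intro z hz
    apply Summable.of_norm_bounded (summable_geometric_of_lt_one (by norm_num) (by norm_num : (1/3:ℝ) < 1))
    intro n
    rw [norm_mul, norm_pow]
    calc ‖sCoef κ c n‖ * ‖z‖ ^ n ≤ (1/3) ^ n * 1 ^ n := by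
          apply mul_le_mul (key n) (pow_le_pow_left₀ (norm_nonneg z) hz n) (by positivity) (by positivity)
      _ = (1/3) ^ n := by norm_num
  -- analyticity
  have hradius : 1 ≤ (FormalMultilinearSeries.ofScalars ℂ (sCoef κ c)).radius := by
    have := FormalMultilinearSeries.le_radius_of_bound
      (FormalMultilinearSeries.ofScalars ℂ (sCoef κ c)) 1 (r := 1) (fun n => by
        rw [FormalMultilinearSeries.ofScalars_norm]
        calc ‖sCoef κ c n‖ * (1:ℝ) ^ n ≤ (1/3:ℝ)^n * 1^n := by
              apply mul_le_mul_of_nonneg_right (key n) (by positivity)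
          _ ≤ 1 := by
              rw [one_pow, mul_one]
              exact pow_le_one₀ (by norm_num) (by norm_num))
    simpa using this
  have hsum_eq : struveU κ c = (FormalMultilinearSeries.ofScalars ℂ (sCoef κ c)).sum := by
    funext z
    rw [struveU_eq]
    rw [show (FormalMultilinearSeries.ofScalars ℂ (sCoef κ c)).sum z
        = FormalMultilinearSeries.ofScalarsSum (sCoef κ c) z from rfl,
      FormalMultilinearSeries.ofScalars_sum_eq]
    simp [smul_eq_mul]
  have hanalytic : AnalyticOnNhd ℂ (struveU κ c) (Metric.ball 0 1) := by
    have hb := (FormalMultilinearSeries.hasFPowerSeriesOnBall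
        (FormalMultilinearSeries.ofScalars ℂ (sCoef κ c))
        (lt_of_lt_of_le one_pos hradius)).analyticOnNhd
    rw [← hsum_eq] at hb
    apply hb.mono
    intro z hz
    rw [EMetric.mem_ball]
    calc edist z 0 < 1 := by
          rw [edist_dist, ← ENNReal.ofReal_one]
          exact ENNReal.ofReal_lt_ofReal_iff one_pos |>.2 (mem_ball.1 hz)
      _ ≤ _ := hradius
  -- value at 0
  have h0 : struveU κ c 0 = 1 := by
    rw [struveU_eq, tsum_eq_single 0 (fun n hn => by simp [zero_pow hn])]
    simp [sCoef_zero]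
  -- bound on the deviation from 1
  have hub : ∀ z : ℂ, ‖z‖ ≤ 1 → ‖struveU κ c z - 1‖ ≤ 1/2 := by
    intro z hz
    have hs := hsumm z hz
    rw [struveU_eq, hs.tsum_eq_zero_add, sCoef_zero, pow_zero, mul_one]
    rw [add_sub_cancel_left]
    have hbnd : ∀ n : ℕ, ‖sCoef κ c (n+1) * z ^ (n+1)‖ ≤ (1/3:ℝ) ^ (n+1) := by
      intro n
      rw [norm_mul, norm_pow]
      calc ‖sCoef κ c (n+1)‖ * ‖z‖ ^ (n+1) ≤ (1/3) ^ (n+1) * 1 ^ (n+1) :=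
            mul_le_mul (key (n+1)) (pow_le_pow_left₀ (norm_nonneg z) hz (n+1))
              (by positivity) (by positivity)
        _ = (1/3) ^ (n+1) := by norm_num
    have hsg : Summable (fun n : ℕ => (1/3:ℝ) ^ (n+1)) := by
      apply Summable.comp_injective (summable_geometric_of_lt_one (by norm_num) (by norm_num : (1/3:ℝ) < 1))
      exact add_left_injective 1
    have hsn : Summable (fun n : ℕ => ‖sCoef κ c (n+1) * z ^ (n+1)‖) :=
      Summable.of_nonneg_of_le (fun n => norm_nonneg _) hbnd hsg
    calc ‖∑' n : ℕ, sCoef κ c (n+1) * z ^ (n+1)‖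
        ≤ ∑' n : ℕ, ‖sCoef κ c (n+1) * z ^ (n+1)‖ := norm_tsum_le_tsum_norm hsn
      _ ≤ ∑' n : ℕ, (1/3:ℝ) ^ (n+1) := Summable.tsum_le_tsum hbnd hsn hsg
      _ = 1/2 := by
          have : ∀ n : ℕ, (1/3:ℝ) ^ (n+1) = (1/3:ℝ) * (1/3:ℝ)^n := fun n => by ring
          rw [tsum_congr this, tsum_mul_left,
            tsum_geometric_of_lt_one (by norm_num) (by norm_num)]
          norm_num
  refine ⟨hanalytic, h0, fun z hz => ?_⟩
  have hz1 : ‖z‖ ≤ 1 := le_of_lt (mem_ball_zero_iff.1 hz)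
  have hw : ‖struveU κ c z - 1‖ ≤ 1/2 := hub z hz1
  have hw0 : struveU κ c z ≠ 0 := by
    intro hzero
    rw [hzero] at hw
    norm_num at hw
  refine ⟨Complex.log (struveU κ c z), ?_, Complex.exp_log hw0⟩
  rw [mem_ball_zero_iff]
  have hlog := Complex.norm_log_one_add_half_le_self (z := struveU κ c z - 1) hw
  rw [add_sub_cancel] at hlog
  calc ‖Complex.log (struveU κ c z)‖ ≤ 3/2 * ‖struveU κ c z - 1‖ := hlog
    _ ≤ 3/2 * (1/2) := by linarith
    _ < 1 := by norm_num
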